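/- arXiv:2604.24691 — 5 statements merged into one kernel-verified Lean document; each statement's English description precedes it below -/
import Mathlib

section
/- For n×n real positive definite symmetric matrices W and Q, the matrix Y := W^{1/2} (W^{1/2} Q W^{1/2})^{-1/2} W^{1/2} is positive definite and satisfies Y Q Y = W. -/
open Matrix

namespace Matrix.PosSemidef

open scoped ComplexOrder

/-- The positive semidefinite square root of a positive semidefinite matrix
(the definition removed from Mathlib, restored verbatim). -/
noncomputable def sqrt {n 𝕜 : Type*} [Fintype n] [RCLike 𝕜] [DecidableEq n]
    {A : Matrix n n 𝕜} (hA : A.PosSemidef) : Matrix n n 𝕜 :=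
  hA.1.eigenvectorUnitary.1 * diagonal ((↑) ∘ (fun x => Real.sqrt x) ∘ hA.1.eigenvalues) *
    (star hA.1.eigenvectorUnitary : Matrix n n 𝕜)


lemma posSemidef_sqrt {n 𝕜 : Type*} [Fintype n] [RCLike 𝕜] [DecidableEq n]
    {A : Matrix n n 𝕜} (hA : A.PosSemidef) : PosSemidef hA.sqrt := by
  unfold sqrt
  apply PosSemidef.mul_mul_conjTranspose_same
  refine posSemidef_diagonal_iff.mpr fun i ↦ ?_
  rw [Function.comp_apply, RCLike.nonneg_iff]
  constructor
  · simp only [Function.comp_apply, RCLike.ofReal_re]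
    exact Real.sqrt_nonneg _
  · simp only [Function.comp_apply, RCLike.ofReal_im]

lemma sqrt_mul_self {n 𝕜 : Type*} [Fintype n] [RCLike 𝕜] [DecidableEq n]
    {A : Matrix n n 𝕜} (hA : A.PosSemidef) : hA.sqrt * hA.sqrt = A := by
  unfold sqrt
  conv_rhs => rw [hA.1.spectral_theorem, Unitary.conjStarAlgAut_apply]
  have hU : (star hA.1.eigenvectorUnitary : Matrix n n 𝕜) * hA.1.eigenvectorUnitary.1 = 1 :=
    Unitary.coe_star_mul_self _
  calc _ = hA.1.eigenvectorUnitary.1 *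
        (diagonal ((↑) ∘ (fun x => Real.sqrt x) ∘ hA.1.eigenvalues) *
        ((star hA.1.eigenvectorUnitary : Matrix n n 𝕜) * hA.1.eigenvectorUnitary.1) *
        diagonal ((↑) ∘ (fun x => Real.sqrt x) ∘ hA.1.eigenvalues)) *
        (star hA.1.eigenvectorUnitary : Matrix n n 𝕜) := by
          simp only [Matrix.mul_assoc]
    _ = _ := by
      rw [hU, Matrix.mul_one, diagonal_mul_diagonal]
      congr 3
      funext i
      simp only [Function.comp_apply, ← RCLike.ofReal_mul]
      rw [Real.mul_self_sqrt (hA.eigenvalues_nonneg i)]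

end Matrix.PosSemidef

section aux

variable {n : ℕ}

lemma aux_posDef_of_isUnit {A : Matrix (Fin n) (Fin n) ℝ} (hA : A.PosSemidef)
    (hu : IsUnit A.det) : A.PosDef := by
  refine posDef_iff_dotProduct_mulVec.mpr ⟨hA.1, fun x hx => ?_⟩
  rcases (hA.dotProduct_mulVec_nonneg x).lt_or_eq with h | h
  · exact h
  · exfalso
    apply hx
    have h0 : A *ᵥ x = 0 := (hA.dotProduct_mulVec_zero_iff x).mp h.symm
    exact Matrix.mulVec_injective_iff_isUnit.mpr ((Matrix.isUnit_iff_isUnit_det A).mpr hu) (by simpa using h0 : A *ᵥ x = A *ᵥ 0)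

lemma aux_conj_posDef {A B : Matrix (Fin n) (Fin n) ℝ} (hA : A.PosDef)
    (hB : IsUnit B.det) : (Bᴴ * A * B).PosDef := by
  refine posDef_iff_dotProduct_mulVec.mpr ⟨Matrix.isHermitian_conjTranspose_mul_mul B hA.1, fun x hx => ?_⟩
  have hBx : B *ᵥ x ≠ 0 := fun h0 =>
    hx (Matrix.mulVec_injective_iff_isUnit.mpr ((Matrix.isUnit_iff_isUnit_det B).mpr hB) (by simpa using h0 : B *ᵥ x = B *ᵥ 0))
  have heq : star x ⬝ᵥ (Bᴴ * A * B) *ᵥ x = star (B *ᵥ x) ⬝ᵥ A *ᵥ (B *ᵥ x) := by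
    simp only [← Matrix.mulVec_mulVec, Matrix.mul_assoc, dotProduct_mulVec, star_mulVec,
      Matrix.vecMul_vecMul]
  rw [heq]
  exact hA.dotProduct_mulVec_pos hBx

lemma aux_det_isUnit_of_sq {A B : Matrix (Fin n) (Fin n) ℝ} (hAB : A * A = B)
    (hB : B.PosDef) : IsUnit A.det := by
  have h1 : A.det * A.det = B.det := by rw [← det_mul, hAB]
  refine isUnit_iff_ne_zero.mpr fun h0 => ?_
  rw [h0, mul_zero] at h1
  exact hB.det_pos.ne h1

end aux

/-- For n×n real positive definite symmetric matrices `W` and `Q`, the matrix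
`Y := W^{1/2} (W^{1/2} Q W^{1/2})^{-1/2} W^{1/2}` is positive definite and satisfies
`Y Q Y = W`. -/
theorem stmt0 {n : ℕ} (W Q : Matrix (Fin n) (Fin n) ℝ)
    (hW : W.PosDef) (hQ : Q.PosDef)
    (h : (hW.posSemidef.sqrt * Q * hW.posSemidef.sqrt).PosSemidef) :
    (hW.posSemidef.sqrt * h.sqrt⁻¹ * hW.posSemidef.sqrt).PosDef ∧
      (hW.posSemidef.sqrt * h.sqrt⁻¹ * hW.posSemidef.sqrt) * Q *
        (hW.posSemidef.sqrt * h.sqrt⁻¹ * hW.posSemidef.sqrt) = W := by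
  set S := hW.posSemidef.sqrt with hSdef
  have hSsemi : S.PosSemidef := hW.posSemidef.posSemidef_sqrt
  have hS2 : S * S = W := hW.posSemidef.sqrt_mul_self
  have hSdet : IsUnit S.det := aux_det_isUnit_of_sq hS2 hW
  have hSH : Sᴴ = S := hSsemi.1
  have hMpd : (S * Q * S).PosDef := by
    have := aux_conj_posDef hQ hSdet
    rwa [hSH] at this
  have hT2 : h.sqrt * h.sqrt = S * Q * S := h.sqrt_mul_self
  have hTdet : IsUnit h.sqrt.det := aux_det_isUnit_of_sq hT2 hMpd
  have hTpd : h.sqrt.PosDef := aux_posDef_of_isUnit h.posSemidef_sqrt hTdet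
  have hTinvpd : h.sqrt⁻¹.PosDef := hTpd.inv
  constructor
  · have := aux_conj_posDef hTinvpd hSdet
    rwa [hSH] at this
  · obtain ⟨T, hT⟩ : ∃ T, h.sqrt = T := ⟨h.sqrt, rfl⟩
    rw [hT] at hT2 hTdet ⊢
    have hinv1 : T⁻¹ * T = 1 := nonsing_inv_mul _ hTdet
    have hinv2 : T * T⁻¹ = 1 := mul_nonsing_inv _ hTdet
    calc (S * T⁻¹ * S) * Q * (S * T⁻¹ * S)
        = S * (T⁻¹ * ((S * Q * S) * T⁻¹)) * S := by
          simp only [Matrix.mul_assoc]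
      _ = S * (T⁻¹ * (T * (T * T⁻¹))) * S := by
          rw [← hT2]; simp only [Matrix.mul_assoc]
      _ = W := by rw [hinv2, Matrix.mul_one, hinv1, Matrix.mul_one, hS2]
end

section
/- Suppose every matrix in GL⁺(n,ℝ) can be written as a product of five real symmetric positive definite matrices. Then for any matrices M, M₁, M₂, M₃, M₄ ∈ GL⁺(n,ℝ), there exist real symmetric positive definite matrices Q̄₁,…,Q̄₅ such that M = Q̄₅ M₄ Q̄₄ M₃ Q̄₃ M₂ Q̄₂ M₁ Q̄₁. -/
open Matrix

lemma posdef_conj {n : ℕ} {Q A : Matrix (Fin n) (Fin n) ℝ} (hQ : Q.PosDef)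
    (hA : IsUnit A.det) : (A * Q * Aᵀ).PosDef := by
  have hAT : Aᵀ = Aᴴ := by
    ext i j; simp [conjTranspose]
  rw [posDef_iff_dotProduct_mulVec]
  constructor
  · rw [hAT]; exact isHermitian_mul_mul_conjTranspose A hQ.1
  · intro x hx
    have hx' : Aᵀ *ᵥ x ≠ 0 := by
      intro h
      apply hx
      have hAu : IsUnit Aᵀ.det := by simpa using hA
      calc x = (Aᵀ⁻¹ * Aᵀ) *ᵥ x := by rw [Matrix.nonsing_inv_mul Aᵀ hAu, one_mulVec]
        _ = Aᵀ⁻¹ *ᵥ (Aᵀ *ᵥ x) := by rw [mulVec_mulVec]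
        _ = 0 := by rw [h, mulVec_zero]
    have h2 := hQ.dotProduct_mulVec_pos hx'
    have key : star x ⬝ᵥ (A * Q * Aᵀ) *ᵥ x = star (Aᵀ *ᵥ x) ⬝ᵥ Q *ᵥ (Aᵀ *ᵥ x) := by
      rw [star_mulVec, hAT, conjTranspose_conjTranspose]
      simp [dotProduct_mulVec, vecMul_vecMul, Matrix.mul_assoc]
    rw [key]
    exact h2

/-- Assuming Ballantine's theorem (every real matrix with positive determinant is a product of
five symmetric positive definite matrices), for any `M, M₁, M₂, M₃, M₄` with positive
determinant there exist symmetric positive definite `Q̄₁,…,Q̄₅` with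
`M = Q̄₅ M₄ Q̄₄ M₃ Q̄₃ M₂ Q̄₂ M₁ Q̄₁`. -/
theorem stmt4 {n : ℕ}
    (ballantine : ∀ M : Matrix (Fin n) (Fin n) ℝ, 0 < M.det →
      ∃ Q₁ Q₂ Q₃ Q₄ Q₅ : Matrix (Fin n) (Fin n) ℝ,
        Q₁.PosDef ∧ Q₂.PosDef ∧ Q₃.PosDef ∧ Q₄.PosDef ∧ Q₅.PosDef ∧
          M = Q₅ * Q₄ * Q₃ * Q₂ * Q₁)
    (M M₁ M₂ M₃ M₄ : Matrix (Fin n) (Fin n) ℝ)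
    (hM : 0 < M.det) (h1 : 0 < M₁.det) (h2 : 0 < M₂.det) (h3 : 0 < M₃.det)
    (h4 : 0 < M₄.det) :
    ∃ Q₁ Q₂ Q₃ Q₄ Q₅ : Matrix (Fin n) (Fin n) ℝ,
      Q₁.PosDef ∧ Q₂.PosDef ∧ Q₃.PosDef ∧ Q₄.PosDef ∧ Q₅.PosDef ∧
        M = Q₅ * M₄ * Q₄ * M₃ * Q₃ * M₂ * Q₂ * M₁ * Q₁ := by
  set C₄ : Matrix (Fin n) (Fin n) ℝ := (M₄⁻¹)ᵀ with hC₄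
  set K₃ : Matrix (Fin n) (Fin n) ℝ := C₄ * M₃ with hK₃
  set C₃ : Matrix (Fin n) (Fin n) ℝ := (K₃⁻¹)ᵀ with hC₃
  set K₂ : Matrix (Fin n) (Fin n) ℝ := C₃ * M₂ with hK₂
  set C₂ : Matrix (Fin n) (Fin n) ℝ := (K₂⁻¹)ᵀ with hC₂
  set D : Matrix (Fin n) (Fin n) ℝ := C₂ * M₁ with hD
  have h4u : IsUnit M₄.det := isUnit_iff_ne_zero.2 (ne_of_gt h4)
  have hC₄d : 0 < C₄.det := by
    rw [hC₄, det_transpose, det_nonsing_inv, Ring.inverse_eq_inv']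
    exact inv_pos.2 h4
  have hK₃d : 0 < K₃.det := by rw [hK₃, det_mul]; exact mul_pos hC₄d h3
  have hK₃u : IsUnit K₃.det := isUnit_iff_ne_zero.2 (ne_of_gt hK₃d)
  have hC₃d : 0 < C₃.det := by
    rw [hC₃, det_transpose, det_nonsing_inv, Ring.inverse_eq_inv']; exact inv_pos.2 hK₃d
  have hK₂d : 0 < K₂.det := by rw [hK₂, det_mul]; exact mul_pos hC₃d h2
  have hK₂u : IsUnit K₂.det := isUnit_iff_ne_zero.2 (ne_of_gt hK₂d)
  have hC₂d : 0 < C₂.det := by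
    rw [hC₂, det_transpose, det_nonsing_inv, Ring.inverse_eq_inv']; exact inv_pos.2 hK₂d
  have hDd : 0 < D.det := by rw [hD, det_mul]; exact mul_pos hC₂d h1
  have hDu : IsUnit D.det := isUnit_iff_ne_zero.2 (ne_of_gt hDd)
  have hNd : 0 < (M * Dᵀ).det := by rw [det_mul, det_transpose]; exact mul_pos hM hDd
  obtain ⟨Q₁, Q₂, Q₃, Q₄, Q₅, p1, p2, p3, p4, p5, hN⟩ := ballantine (M * Dᵀ) hNd
  have hM₄i : IsUnit (M₄⁻¹).det := by
    rw [det_nonsing_inv, Ring.inverse_eq_inv']; exact isUnit_iff_ne_zero.2 (ne_of_gt (inv_pos.2 h4))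
  have hK₃i : IsUnit (K₃⁻¹).det := by
    rw [det_nonsing_inv, Ring.inverse_eq_inv']; exact isUnit_iff_ne_zero.2 (ne_of_gt (inv_pos.2 hK₃d))
  have hK₂i : IsUnit (K₂⁻¹).det := by
    rw [det_nonsing_inv, Ring.inverse_eq_inv']; exact isUnit_iff_ne_zero.2 (ne_of_gt (inv_pos.2 hK₂d))
  have hDi : IsUnit (D⁻¹).det := by
    rw [det_nonsing_inv, Ring.inverse_eq_inv']; exact isUnit_iff_ne_zero.2 (ne_of_gt (inv_pos.2 hDd))
  refine ⟨D⁻¹ * Q₁ * (D⁻¹)ᵀ, K₂⁻¹ * Q₂ * (K₂⁻¹)ᵀ, K₃⁻¹ * Q₃ * (K₃⁻¹)ᵀ,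
    M₄⁻¹ * Q₄ * (M₄⁻¹)ᵀ, Q₅,
    posdef_conj p1 hDi, posdef_conj p2 hK₂i, posdef_conj p3 hK₃i,
    posdef_conj p4 hM₄i, p5, ?_⟩
  have e4 : M₄ * (M₄⁻¹ * Q₄ * (M₄⁻¹)ᵀ) = Q₄ * C₄ := by
    rw [← Matrix.mul_assoc, ← Matrix.mul_assoc, Matrix.mul_nonsing_inv _ h4u,
      Matrix.one_mul, hC₄]
  have e3 : K₃ * (K₃⁻¹ * Q₃ * (K₃⁻¹)ᵀ) = Q₃ * C₃ := by
    rw [← Matrix.mul_assoc, ← Matrix.mul_assoc, Matrix.mul_nonsing_inv _ hK₃u,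
      Matrix.one_mul, hC₃]
  have e2 : K₂ * (K₂⁻¹ * Q₂ * (K₂⁻¹)ᵀ) = Q₂ * C₂ := by
    rw [← Matrix.mul_assoc, ← Matrix.mul_assoc, Matrix.mul_nonsing_inv _ hK₂u,
      Matrix.one_mul, hC₂]
  have e1 : D * (D⁻¹ * Q₁ * (D⁻¹)ᵀ) = Q₁ * (D⁻¹)ᵀ := by
    rw [← Matrix.mul_assoc, ← Matrix.mul_assoc, Matrix.mul_nonsing_inv _ hDu,
      Matrix.one_mul]
  have eD : Dᵀ * (D⁻¹)ᵀ = 1 := by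
    rw [← Matrix.transpose_mul, Matrix.nonsing_inv_mul _ hDu, transpose_one]
  calc M = M * Dᵀ * (D⁻¹)ᵀ := by rw [Matrix.mul_assoc, eD, Matrix.mul_one]
    _ = Q₅ * Q₄ * Q₃ * Q₂ * Q₁ * (D⁻¹)ᵀ := by rw [hN]
    _ = Q₅ * Q₄ * Q₃ * Q₂ * (Q₁ * (D⁻¹)ᵀ) := by rw [Matrix.mul_assoc]
    _ = Q₅ * Q₄ * Q₃ * Q₂ * (D * (D⁻¹ * Q₁ * (D⁻¹)ᵀ)) := by rw [e1]
    _ = Q₅ * Q₄ * Q₃ * (Q₂ * C₂) * M₁ * (D⁻¹ * Q₁ * (D⁻¹)ᵀ) := by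
        rw [hD]; simp only [Matrix.mul_assoc]
    _ = Q₅ * Q₄ * Q₃ * (K₂ * (K₂⁻¹ * Q₂ * (K₂⁻¹)ᵀ)) * M₁ * (D⁻¹ * Q₁ * (D⁻¹)ᵀ) := by
        rw [e2]
    _ = Q₅ * Q₄ * (Q₃ * C₃) * M₂ * (K₂⁻¹ * Q₂ * (K₂⁻¹)ᵀ) * M₁ * (D⁻¹ * Q₁ * (D⁻¹)ᵀ) := by
        rw [hK₂]; simp only [Matrix.mul_assoc]
    _ = Q₅ * Q₄ * (K₃ * (K₃⁻¹ * Q₃ * (K₃⁻¹)ᵀ)) * M₂ * (K₂⁻¹ * Q₂ * (K₂⁻¹)ᵀ) * M₁ *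
        (D⁻¹ * Q₁ * (D⁻¹)ᵀ) := by rw [e3]
    _ = Q₅ * (Q₄ * C₄) * M₃ * (K₃⁻¹ * Q₃ * (K₃⁻¹)ᵀ) * M₂ * (K₂⁻¹ * Q₂ * (K₂⁻¹)ᵀ) * M₁ *
        (D⁻¹ * Q₁ * (D⁻¹)ᵀ) := by rw [hK₃]; simp only [Matrix.mul_assoc]
    _ = Q₅ * (M₄ * (M₄⁻¹ * Q₄ * (M₄⁻¹)ᵀ)) * M₃ * (K₃⁻¹ * Q₃ * (K₃⁻¹)ᵀ) * M₂ *
        (K₂⁻¹ * Q₂ * (K₂⁻¹)ᵀ) * M₁ * (D⁻¹ * Q₁ * (D⁻¹)ᵀ) := by rw [e4]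
    _ = Q₅ * M₄ * (M₄⁻¹ * Q₄ * (M₄⁻¹)ᵀ) * M₃ * (K₃⁻¹ * Q₃ * (K₃⁻¹)ᵀ) * M₂ *
        (K₂⁻¹ * Q₂ * (K₂⁻¹)ᵀ) * M₁ * (D⁻¹ * Q₁ * (D⁻¹)ᵀ) := by
        simp only [Matrix.mul_assoc]
end

section
/- Let N, Q ∈ ℝ^{n×n} with N positive semidefinite and Q positive definite, and let P_N denote the orthogonal projection onto ker N. Then the set {Σ ≻ 0 : P_N Σ P_N = P_N Q P_N} equals the set {Σ ≻ 0 : Σ = (I + N Z) Q (I + Zᵀ N) for some Z ∈ ℝ^{n×n}}. -/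
open Matrix

/-- `P` is the orthogonal projection onto the kernel of `N`: it is symmetric, idempotent,
and its fixed points are exactly the kernel of `N`. -/
def IsOrthProjKer {n : ℕ} (N P : Matrix (Fin n) (Fin n) ℝ) : Prop :=
  Pᵀ = P ∧ P * P = P ∧ ∀ x : Fin n → ℝ, P.mulVec x = x ↔ N.mulVec x = 0

section AuxStmt6

variable {n : ℕ}

private lemma stmt6_dot_mulVec (v w : Fin n → ℝ) (A : Matrix (Fin n) (Fin n) ℝ) :
    (A *ᵥ v) ⬝ᵥ w = v ⬝ᵥ (Aᵀ *ᵥ w) := by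
  rw [Matrix.mulVec_transpose, dotProduct_comm v,
    dotProduct_comm (A *ᵥ v) w, Matrix.dotProduct_mulVec]

private lemma stmt6_eq_one (A : Matrix (Fin n) (Fin n) ℝ) (h : ∀ v, A *ᵥ v = v) : A = 1 := by
  apply Matrix.toLin'.injective
  exact LinearMap.ext fun v => by simp [Matrix.toLin'_apply, h]

private lemma stmt6_eq_zero (A : Matrix (Fin n) (Fin n) ℝ) (h : ∀ v, A *ᵥ v = 0) : A = 0 := by
  apply Matrix.toLin'.injective
  exact LinearMap.ext fun v => by simp [Matrix.toLin'_apply, h]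

private lemma stmt6_lin_mul (A B : Matrix (Fin n) (Fin n) ℝ) :
    Matrix.toEuclideanLin (A * B) =
      (Matrix.toEuclideanLin A).comp (Matrix.toEuclideanLin B) := by
  ext x
  simp [Matrix.toEuclideanLin_apply, Matrix.mulVec_mulVec]

private lemma stmt6_inner_eq (x y : EuclideanSpace ℝ (Fin n)) :
    inner ℝ x y = (WithLp.equiv 2 _ x) ⬝ᵥ (WithLp.equiv 2 _ y) := by
  simp [PiLp.inner_apply, dotProduct, mul_comm]

/-- If `P v = 0` then `v` lies in the range of `N` (for `N` symmetric PSD, `P` the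
orthogonal projection onto `ker N`). -/
private lemma stmt6_ker_sub_range (N P : Matrix (Fin n) (Fin n) ℝ) (hN : N.PosSemidef)
    (hP : IsOrthProjKer N P) (v : Fin n → ℝ) (hv : P *ᵥ v = 0) : ∃ z, N *ᵥ z = v := by
  classical
  set T := Matrix.toEuclideanLin N with hT
  have hNsym : Nᵀ = N := by simpa using hN.1.eq
  have hPsym := hP.1
  have hsymm : ∀ x y : EuclideanSpace ℝ (Fin n), inner ℝ (T x) y = inner ℝ x (T y) := by
    intro x y
    rw [stmt6_inner_eq, stmt6_inner_eq]
    simp only [hT, Matrix.toEuclideanLin_apply, WithLp.equiv_apply, WithLp.ofLp_toLp]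
    rw [stmt6_dot_mulVec, hNsym]
  have hrangeorth : (LinearMap.range T)ᗮ = LinearMap.ker T := by
    ext u
    simp only [Submodule.mem_orthogonal, LinearMap.mem_ker]
    constructor
    · intro h
      have h2 : inner ℝ (T u) (T u) = 0 := by
        have h3 := h (T (T u)) (LinearMap.mem_range_self T (T u))
        rwa [hsymm] at h3
      exact inner_self_eq_zero.mp h2
    · intro h x hx
      obtain ⟨w, rfl⟩ := hx
      rw [hsymm, h, inner_zero_right]
  have hrange : LinearMap.range T = (LinearMap.ker T)ᗮ := by
    rw [← hrangeorth, Submodule.orthogonal_orthogonal]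
  set x : EuclideanSpace ℝ (Fin n) := (WithLp.equiv 2 _).symm v with hx
  have hxmem : x ∈ (LinearMap.ker T)ᗮ := by
    rw [Submodule.mem_orthogonal]
    intro u hu
    have hu' : N *ᵥ (WithLp.equiv 2 _ u) = 0 := by
      have h5 : T u = 0 := LinearMap.mem_ker.mp hu
      have h6 := congrArg (WithLp.equiv 2 (Fin n → ℝ)) h5
      simpa [hT, Matrix.toEuclideanLin_apply] using h6
    have hPu : P *ᵥ (WithLp.equiv 2 _ u) = WithLp.equiv 2 _ u := (hP.2.2 _).2 hu'
    rw [stmt6_inner_eq, hx]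
    rw [Equiv.apply_symm_apply]
    calc (WithLp.equiv 2 _ u) ⬝ᵥ v = (P *ᵥ (WithLp.equiv 2 _ u)) ⬝ᵥ v := by rw [hPu]
      _ = (WithLp.equiv 2 _ u) ⬝ᵥ (Pᵀ *ᵥ v) := stmt6_dot_mulVec _ _ _
      _ = 0 := by rw [hPsym, hv, dotProduct_zero]
  rw [← hrange] at hxmem
  obtain ⟨z, hz⟩ := hxmem
  refine ⟨WithLp.equiv 2 _ z, ?_⟩
  have h7 := congrArg (WithLp.equiv 2 (Fin n → ℝ)) hz
  simpa [hT, Matrix.toEuclideanLin_apply, hx] using h7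

end AuxStmt6

/-- For `N ⪰ 0`, `Q ≻ 0`, and `P` the orthogonal projection onto `ker N`, the set
`{S ≻ 0 : P S P = P Q P}` equals `{S ≻ 0 : S = (I + N Z) Q (I + Zᵀ N) for some Z}`. -/
theorem stmt6 {n : ℕ} (N Q P : Matrix (Fin n) (Fin n) ℝ)
    (hN : N.PosSemidef) (hQ : Q.PosDef) (hP : IsOrthProjKer N P) :
    {S : Matrix (Fin n) (Fin n) ℝ | S.PosDef ∧ P * S * P = P * Q * P} =
      {S : Matrix (Fin n) (Fin n) ℝ | S.PosDef ∧
        ∃ Z : Matrix (Fin n) (Fin n) ℝ, S = (1 + N * Z) * Q * (1 + Zᵀ * N)} := by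
  have hNsym : Nᵀ = N := by simpa using hN.1.eq
  have hPsym : Pᵀ = P := hP.1
  ext S
  simp only [Set.mem_setOf_eq]
  constructor
  · rintro ⟨hS, hPS⟩
    refine ⟨hS, ?_⟩
    classical
    open scoped MatrixOrder in set Lq := CFC.sqrt Q with hLqdef
    open scoped MatrixOrder in set Ls := CFC.sqrt S with hLsdef
    open scoped MatrixOrder in have hLq : Lq * Lq = Q := CFC.sqrt_mul_sqrt_self Q hQ.posSemidef.nonneg
    open scoped MatrixOrder in have hLs : Ls * Ls = S := CFC.sqrt_mul_sqrt_self S hS.posSemidef.nonneg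
    open scoped MatrixOrder in have hLqsym : Lqᵀ = Lq := by simpa using (CFC.sqrt_nonneg Q).posSemidef.1.eq
    open scoped MatrixOrder in have hLssym : Lsᵀ = Ls := by simpa using (CFC.sqrt_nonneg S).posSemidef.1.eq
    have hdetLq : IsUnit Lq.det := by
      have h1 : Lq.det * Lq.det = Q.det := by rw [← Matrix.det_mul, hLq]
      have h2 := hQ.det_pos
      apply isUnit_iff_ne_zero.mpr
      intro h0
      rw [h0, mul_zero] at h1
      exact absurd h1.symm (ne_of_gt h2)
    have hGram : (Ls * P)ᵀ * (Ls * P) = (Lq * P)ᵀ * (Lq * P) := by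
      rw [Matrix.transpose_mul, Matrix.transpose_mul, hPsym, hLssym, hLqsym]
      have e1 : ∀ L : Matrix (Fin n) (Fin n) ℝ, (P * L) * (L * P) = P * (L * L) * P := by
        intro L; noncomm_ring
      rw [e1, e1, hLs, hLq, hPS]
    set f := Matrix.toEuclideanLin (Ls * P) with hf
    set g := Matrix.toEuclideanLin (Lq * P) with hg
    have hinner : ∀ x y : EuclideanSpace ℝ (Fin n),
        inner ℝ (f x) (f y) = inner ℝ (g x) (g y) := by
      intro x y
      rw [stmt6_inner_eq, stmt6_inner_eq]
      simp only [hf, hg, Matrix.toEuclideanLin_apply, WithLp.equiv_apply, WithLp.ofLp_toLp]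
      rw [stmt6_dot_mulVec, stmt6_dot_mulVec, Matrix.mulVec_mulVec, Matrix.mulVec_mulVec, hGram]
    have hnorm : ∀ x, ‖f x‖ = ‖g x‖ := by
      intro x
      have h1 := real_inner_self_eq_norm_sq (f x)
      have h2 := real_inner_self_eq_norm_sq (g x)
      have h3 := hinner x x
      nlinarith [norm_nonneg (f x), norm_nonneg (g x)]
    have hker : LinearMap.ker f ≤ LinearMap.ker g := by
      intro x hx
      have h0 : ‖g x‖ = 0 := by rw [← hnorm, LinearMap.mem_ker.mp hx, norm_zero]
      exact LinearMap.mem_ker.mpr (norm_eq_zero.mp h0)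
    set ψ : ↥(LinearMap.range f) →ₗ[ℝ] EuclideanSpace ℝ (Fin n) :=
      ((LinearMap.ker f).liftQ g hker).comp f.quotKerEquivRange.symm.toLinearMap with hψ
    have hψap : ∀ (x : EuclideanSpace ℝ (Fin n)) (h : f x ∈ LinearMap.range f),
        ψ ⟨f x, h⟩ = g x := by
      intro x h
      have h1 : f.quotKerEquivRange.symm ⟨f x, h⟩ = (LinearMap.ker f).mkQ x :=
        f.quotKerEquivRange_symm_apply_image x h
      simp only [hψ, LinearMap.comp_apply, LinearEquiv.coe_toLinearMap, h1]
      simp [Submodule.mkQ_apply]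
    set ψi : ↥(LinearMap.range f) →ₗᵢ[ℝ] EuclideanSpace ℝ (Fin n) :=
      ⟨ψ, by
        rintro ⟨-, w, rfl⟩
        show ‖ψ ⟨f w, LinearMap.mem_range_self f w⟩‖ = _
        rw [hψap w _, ← hnorm w]
        rfl⟩ with hψi
    set U := ψi.extend with hUdef
    have hU : ∀ x, U (f x) = g x := by
      intro x
      have h1 := ψi.extend_apply ⟨f x, LinearMap.mem_range_self f x⟩
      rw [← hUdef] at h1
      rw [show U (f x) = U ↑(⟨f x, LinearMap.mem_range_self f x⟩ : ↥(LinearMap.range f)) from rfl,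
        h1]
      exact hψap x _
    set Um := Matrix.toEuclideanLin.symm U.toLinearMap with hUmdef
    have hUmlin : Matrix.toEuclideanLin Um = U.toLinearMap :=
      Matrix.toEuclideanLin.apply_symm_apply _
    have hUmeq : Um * (Ls * P) = Lq * P := by
      apply Matrix.toEuclideanLin.injective
      rw [stmt6_lin_mul, hUmlin, ← hf, ← hg]
      exact LinearMap.ext fun x => hU x
    have hUap : ∀ y : EuclideanSpace ℝ (Fin n),
        (WithLp.equiv 2 (Fin n → ℝ)) (U y) = Um *ᵥ ((WithLp.equiv 2 (Fin n → ℝ)) y) := by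
      intro y
      have h1 : U y = Matrix.toEuclideanLin Um y := by rw [hUmlin]; rfl
      rw [h1, Matrix.toEuclideanLin_apply]
      simp only [WithLp.equiv_apply, WithLp.ofLp_toLp]
    have horth : Umᵀ * Um = 1 := by
      have h2 : ∀ x w : Fin n → ℝ, x ⬝ᵥ ((Umᵀ * Um) *ᵥ w) = x ⬝ᵥ w := by
        intro x w
        have h3 := U.inner_map_map ((WithLp.equiv 2 (Fin n → ℝ)).symm x)
          ((WithLp.equiv 2 (Fin n → ℝ)).symm w)
        rw [stmt6_inner_eq, stmt6_inner_eq, hUap, hUap] at h3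
        simp only [Equiv.apply_symm_apply] at h3
        have h4 : (Um *ᵥ x) ⬝ᵥ (Um *ᵥ w) = x ⬝ᵥ ((Umᵀ * Um) *ᵥ w) := by
          rw [stmt6_dot_mulVec, Matrix.mulVec_mulVec]
        rw [← h4]
        exact h3
      apply stmt6_eq_one
      intro w
      have hd : ((Umᵀ * Um) *ᵥ w - w) ⬝ᵥ ((Umᵀ * Um) *ᵥ w - w) = 0 := by
        have e1 := h2 ((Umᵀ * Um) *ᵥ w) w
        have e2 := h2 w w
        rw [dotProduct_sub, sub_dotProduct, sub_dotProduct, e1, e2]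
        ring
      have := dotProduct_self_eq_zero.mp hd
      exact sub_eq_zero.mp this
    set M := Ls * Umᵀ * Lq⁻¹ with hM
    have hMt : Mᵀ = Lq⁻¹ * (Um * Ls) := by
      rw [hM, Matrix.transpose_mul, Matrix.transpose_mul, Matrix.transpose_transpose,
        Matrix.transpose_nonsing_inv, hLqsym, hLssym]
    have hMsp : M * Q * Mᵀ = S := by
      rw [hM, hMt, ← hLq]
      simp only [Matrix.mul_assoc]
      rw [Matrix.nonsing_inv_mul_cancel_left _ _ hdetLq,
        Matrix.mul_nonsing_inv_cancel_left _ _ hdetLq,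
        ← Matrix.mul_assoc Umᵀ Um Ls, horth, Matrix.one_mul, hLs]
    have h4 : P * (Ls * Umᵀ) = P * Lq := by
      have h5 := congrArg Matrix.transpose hUmeq
      simpa [Matrix.transpose_mul, hPsym, hLssym, hLqsym, Matrix.mul_assoc] using h5
    have hPM : P * M = P := by
      rw [hM, ← Matrix.mul_assoc, h4, Matrix.mul_assoc,
        Matrix.mul_nonsing_inv _ hdetLq, Matrix.mul_one]
    have hPM0 : P * (M - 1) = 0 := by rw [Matrix.mul_sub, hPM, Matrix.mul_one, sub_self]
    have hcol : ∀ j, P *ᵥ (fun i => (M - 1) i j) = 0 := by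
      intro j
      funext i
      have h6 := congrFun (congrFun hPM0 i) j
      simpa [Matrix.mul_apply, Matrix.mulVec, dotProduct] using h6
    choose zf hzf using fun j => stmt6_ker_sub_range N P hN hP _ (hcol j)
    refine ⟨Matrix.of (fun i j => zf j i), ?_⟩
    set Z := Matrix.of (fun i j => zf j i) with hZ
    have hNZ : N * Z = M - 1 := by
      ext i j
      have h7 := congrFun (hzf j) i
      simpa [Matrix.mul_apply, Matrix.mulVec, dotProduct, hZ] using h7
    have hMeq : M = 1 + N * Z := by rw [hNZ]; abel
    have hMt2 : Mᵀ = 1 + Zᵀ * N := by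
      rw [hMeq, Matrix.transpose_add, Matrix.transpose_one, Matrix.transpose_mul, hNsym]
    rw [← hMt2, ← hMeq, hMsp]
  · rintro ⟨hS, Z, rfl⟩
    refine ⟨hS, ?_⟩
    have hNP : N * P = 0 := by
      apply stmt6_eq_zero
      intro v
      rw [← Matrix.mulVec_mulVec]
      apply (hP.2.2 _).1
      rw [Matrix.mulVec_mulVec, hP.2.1]
    have hPN : P * N = 0 := by
      have h5 := congrArg Matrix.transpose hNP
      simpa [Matrix.transpose_mul, hPsym, hNsym] using h5
    have h1 : P * (1 + N * Z) = P := by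
      rw [Matrix.mul_add, Matrix.mul_one, ← Matrix.mul_assoc, hPN, Matrix.zero_mul, add_zero]
    have h2 : (1 + Zᵀ * N) * P = P := by
      rw [Matrix.add_mul, Matrix.one_mul, Matrix.mul_assoc, hNP, Matrix.mul_zero, add_zero]
    calc P * ((1 + N * Z) * Q * (1 + Zᵀ * N)) * P
        = (P * (1 + N * Z)) * Q * ((1 + Zᵀ * N) * P) := by noncomm_ring
      _ = P * Q * P := by rw [h1, h2]
end

section
/- Let N, Q ∈ ℝ^{n×n} with N positive semidefinite and Q positive definite, and let P_N be the orthogonal projection onto ker N. Then every positive definite Σ satisfying P_N Σ P_N = P_N Q P_N can be written as Σ = (I + N Y) Q (I + Y N) for some symmetric Y ∈ ℝ^{n×n} with I + N^{1/2} Y N^{1/2} ≻ 0. -/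
open Matrix

namespace Stmt7Aux

variable {m : Type*} [Fintype m] [DecidableEq m]

lemma eq_zero_of_mulVec {A : Matrix m m ℝ} (h : ∀ x, A *ᵥ x = 0) : A = 0 := by
  ext i j
  have := congrFun (h (Pi.single j 1)) i
  simpa [Matrix.mulVec_single] using this

lemma herm_iff_transpose (A : Matrix m m ℝ) : A.IsHermitian ↔ Aᵀ = A := by
  rw [Matrix.IsHermitian, Matrix.conjTranspose_eq_transpose_of_trivial]

lemma dot_conj (C X : Matrix m m ℝ) (x : m → ℝ) :
    x ⬝ᵥ (Cᵀ * X * C) *ᵥ x = (C *ᵥ x) ⬝ᵥ (X *ᵥ (C *ᵥ x)) := by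
  rw [mul_assoc, ← mulVec_mulVec, dotProduct_mulVec, vecMul_transpose, mulVec_mulVec]

noncomputable def psdSqrt {A : Matrix m m ℝ} (hA : A.PosSemidef) : Matrix m m ℝ :=
  hA.1.eigenvectorUnitary.1 * diagonal ((RCLike.ofReal : ℝ → ℝ) ∘ Real.sqrt ∘ hA.1.eigenvalues) *
    (star hA.1.eigenvectorUnitary : Matrix m m ℝ)

lemma psdSqrt_posSemidef {A : Matrix m m ℝ} (hA : A.PosSemidef) : (psdSqrt hA).PosSemidef := by
  unfold psdSqrt
  have hU : (star hA.1.eigenvectorUnitary : Matrix m m ℝ) = (hA.1.eigenvectorUnitary.1)ᴴ := rfl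
  rw [hU]
  apply PosSemidef.mul_mul_conjTranspose_same
  rw [posSemidef_diagonal_iff]
  intro i
  simp [Real.sqrt_nonneg]

lemma psdSqrt_mul_self {A : Matrix m m ℝ} (hA : A.PosSemidef) : psdSqrt hA * psdSqrt hA = A := by
  unfold psdSqrt
  set U := hA.1.eigenvectorUnitary
  have hUU : (star U : Matrix m m ℝ) * U.1 = 1 := Unitary.coe_star_mul_self U
  have hd : diagonal ((RCLike.ofReal : ℝ → ℝ) ∘ Real.sqrt ∘ hA.1.eigenvalues) *
      diagonal ((RCLike.ofReal : ℝ → ℝ) ∘ Real.sqrt ∘ hA.1.eigenvalues) =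
      diagonal ((RCLike.ofReal : ℝ → ℝ) ∘ hA.1.eigenvalues) := by
    rw [diagonal_mul_diagonal]
    congr 1
    funext i
    simp [Real.mul_self_sqrt (hA.eigenvalues_nonneg i)]
  calc _ = U.1 * (diagonal ((RCLike.ofReal : ℝ → ℝ) ∘ Real.sqrt ∘ hA.1.eigenvalues) *
        ((star U : Matrix m m ℝ) * U.1) *
        diagonal ((RCLike.ofReal : ℝ → ℝ) ∘ Real.sqrt ∘ hA.1.eigenvalues)) *
        (star U : Matrix m m ℝ) := by simp only [mul_assoc]
    _ = A := by
      rw [hUU, mul_one, hd]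
      conv_rhs => rw [hA.1.spectral_theorem]
      rw [Unitary.conjStarAlgAut_apply]

lemma posDef_conj_add {X1 X2 : Matrix m m ℝ} (C1 C2 : Matrix m m ℝ)
    (h1 : X1.PosDef) (h2 : X2.PosDef)
    (h : ∀ x : m → ℝ, C1 *ᵥ x = 0 → C2 *ᵥ x = 0 → x = 0) :
    (C1ᵀ * X1 * C1 + C2ᵀ * X2 * C2).PosDef := by
  have h1t : X1ᵀ = X1 := (herm_iff_transpose _).1 h1.isHermitian
  have h2t : X2ᵀ = X2 := (herm_iff_transpose _).1 h2.isHermitian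
  refine PosDef.of_dotProduct_mulVec_pos ?_ ?_
  · rw [herm_iff_transpose]
    simp [Matrix.transpose_mul, Matrix.transpose_add, h1t, h2t, mul_assoc]
  · intro x hx
    have hsx : star x = x := by simp
    rw [add_mulVec, dotProduct_add, hsx, dot_conj, dot_conj]
    rcases eq_or_ne (C1 *ᵥ x) 0 with hc1 | hc1
    · rcases eq_or_ne (C2 *ᵥ x) 0 with hc2 | hc2
      · exact absurd (h x hc1 hc2) hx
      · have p2 := h2.dotProduct_mulVec_pos hc2
        rw [show star (C2 *ᵥ x) = C2 *ᵥ x by simp] at p2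
        have p1 := h1.posSemidef.dotProduct_mulVec_nonneg (C1 *ᵥ x)
        rw [show star (C1 *ᵥ x) = C1 *ᵥ x by simp] at p1
        linarith
    · have p1 := h1.dotProduct_mulVec_pos hc1
      rw [show star (C1 *ᵥ x) = C1 *ᵥ x by simp] at p1
      have p2 := h2.posSemidef.dotProduct_mulVec_nonneg (C2 *ᵥ x)
      rw [show star (C2 *ᵥ x) = C2 *ᵥ x by simp] at p2
      linarith

lemma posDef_conj {X : Matrix m m ℝ} (C : Matrix m m ℝ) (hX : X.PosDef)
    (h : ∀ x : m → ℝ, C *ᵥ x = 0 → x = 0) :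
    (Cᵀ * X * C).PosDef := by
  have hXt : Xᵀ = X := (herm_iff_transpose _).1 hX.isHermitian
  refine PosDef.of_dotProduct_mulVec_pos ?_ ?_
  · rw [herm_iff_transpose]
    simp [Matrix.transpose_mul, hXt, mul_assoc]
  · intro x hx
    have hsx : star x = x := by simp
    rw [hsx, dot_conj]
    have hc : C *ᵥ x ≠ 0 := fun hc => hx (h x hc)
    have p := hX.dotProduct_mulVec_pos hc
    rwa [show star (C *ᵥ x) = C *ᵥ x by simp] at p

/-- sqrt of a positive definite matrix is positive definite -/
lemma posDef_sqrt {W : Matrix m m ℝ} (hW : W.PosDef) : (psdSqrt hW.posSemidef).PosDef := by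
  set w := psdSqrt hW.posSemidef with hw
  refine PosDef.of_dotProduct_mulVec_pos (psdSqrt_posSemidef hW.posSemidef).isHermitian (fun x hx => ?_)
  rcases lt_or_eq_of_le ((psdSqrt_posSemidef hW.posSemidef).dotProduct_mulVec_nonneg x) with h | h
  · exact h
  · exfalso
    have hzero : w *ᵥ x = 0 :=
      ((psdSqrt_posSemidef hW.posSemidef).dotProduct_mulVec_zero_iff x).1 h.symm
    have : W *ᵥ x = 0 := by
      rw [← psdSqrt_mul_self hW.posSemidef, ← mulVec_mulVec, hzero, mulVec_zero]
    have hp := hW.dotProduct_mulVec_pos hx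
    rw [this, dotProduct_zero] at hp
    exact lt_irrefl _ hp

end Stmt7Aux

namespace Stmt7Aux2
open Stmt7Aux
variable {m : Type*} [Fintype m] [DecidableEq m]

lemma sqrt_mul_proj {W P : Matrix m m ℝ} (hW : W.PosDef) (h : W * P = P) :
    psdSqrt hW.posSemidef * P = P := by
  set w := psdSqrt hW.posSemidef with hwdef
  have hww : w * w = W := psdSqrt_mul_self hW.posSemidef
  have hw1 : (w + 1).PosDef :=
    Matrix.PosDef.posSemidef_add (psdSqrt_posSemidef hW.posSemidef) Matrix.PosDef.one
  have key : (w + 1) * (w * P - P) = 0 := by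
    have e : (w + 1) * (w * P - P) = w * w * P - P := by noncomm_ring
    rw [e, hww, h, sub_self]
  have hdet : IsUnit (w + 1).det := hw1.det_pos.ne'.isUnit
  have h2 : w * P - P = 0 := by
    calc w * P - P = ((w + 1)⁻¹ * (w + 1)) * (w * P - P) := by
          rw [Matrix.nonsing_inv_mul _ hdet, one_mul]
      _ = (w + 1)⁻¹ * ((w + 1) * (w * P - P)) := by rw [mul_assoc]
      _ = 0 := by rw [key, mul_zero]
  rw [← sub_eq_zero]; exact h2

lemma exists_geo_mean {W Sg P : Matrix m m ℝ} (hW : W.PosDef) (hSg : Sg.PosDef)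
    (hWP : W * P = P) (hSgP : Sg * P = P) (hPt : Pᵀ = P) :
    ∃ G : Matrix m m ℝ, G.PosDef ∧ Gᵀ = G ∧ G * W * G = Sg ∧ G * P = P ∧ P * G = P := by
  set w := psdSqrt hW.posSemidef with hwdef
  have hwpd : w.PosDef := posDef_sqrt hW
  have hww : w * w = W := psdSqrt_mul_self hW.posSemidef
  have hwt : wᵀ = w := (herm_iff_transpose w).1 hwpd.isHermitian
  have hdet : IsUnit w.det := hwpd.det_pos.ne'.isUnit
  have hwl : w * w⁻¹ = 1 := Matrix.mul_nonsing_inv w hdet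
  have hwr : w⁻¹ * w = 1 := Matrix.nonsing_inv_mul w hdet
  have hwit : (w⁻¹)ᵀ = w⁻¹ := by rw [Matrix.transpose_nonsing_inv, hwt]
  have hwSw : (wᵀ * Sg * w).PosDef := by
    refine posDef_conj w hSg (fun x hx => ?_)
    have h1 : (w⁻¹ * w) *ᵥ x = 0 := by rw [← Matrix.mulVec_mulVec, hx, Matrix.mulVec_zero]
    rwa [hwr, Matrix.one_mulVec] at h1
  set K := psdSqrt hwSw.posSemidef with hKdef
  have hKpd : K.PosDef := posDef_sqrt hwSw
  have hKK : K * K = wᵀ * Sg * w := psdSqrt_mul_self hwSw.posSemidef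
  have hKt : Kᵀ = K := (herm_iff_transpose K).1 hKpd.isHermitian
  have hGpd : (w⁻¹ * K * w⁻¹).PosDef := by
    have h1 : ((w⁻¹)ᵀ * K * w⁻¹).PosDef := by
      refine posDef_conj (w⁻¹) hKpd (fun x hx => ?_)
      have h1 : (w * w⁻¹) *ᵥ x = 0 := by rw [← Matrix.mulVec_mulVec, hx, Matrix.mulVec_zero]
      rwa [hwl, Matrix.one_mulVec] at h1
    rwa [hwit] at h1
  have hGt : (w⁻¹ * K * w⁻¹)ᵀ = w⁻¹ * K * w⁻¹ := by
    rw [Matrix.transpose_mul, Matrix.transpose_mul, hwit, hKt, mul_assoc]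
  have hwP : w * P = P := sqrt_mul_proj hW hWP
  have hwiP : w⁻¹ * P = P := by
    calc w⁻¹ * P = w⁻¹ * (w * P) := by rw [hwP]
      _ = (w⁻¹ * w) * P := by rw [mul_assoc]
      _ = P := by rw [hwr, one_mul]
  have hKP : K * P = P := by
    refine sqrt_mul_proj hwSw ?_
    calc wᵀ * Sg * w * P = wᵀ * (Sg * (w * P)) := by noncomm_ring
      _ = P := by rw [hwP, hSgP, hwt, hwP]
  have hGP : (w⁻¹ * K * w⁻¹) * P = P := by
    calc (w⁻¹ * K * w⁻¹) * P = w⁻¹ * (K * (w⁻¹ * P)) := by noncomm_ring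
      _ = P := by rw [hwiP, hKP, hwiP]
  have hPG : P * (w⁻¹ * K * w⁻¹) = P := by
    have := congrArg Matrix.transpose hGP
    rwa [Matrix.transpose_mul, hGt, hPt] at this
  refine ⟨w⁻¹ * K * w⁻¹, hGpd, hGt, ?_, hGP, hPG⟩
  calc (w⁻¹ * K * w⁻¹) * W * (w⁻¹ * K * w⁻¹)
      = w⁻¹ * (K * ((w⁻¹ * w) * ((w * w⁻¹) * (K * w⁻¹)))) := by rw [← hww]; noncomm_ring
    _ = w⁻¹ * (K * K) * w⁻¹ := by rw [hwr, hwl, one_mul, one_mul]; noncomm_ring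
    _ = w⁻¹ * (wᵀ * Sg * w) * w⁻¹ := by rw [hKK]
    _ = (w⁻¹ * w) * Sg * (w * w⁻¹) := by rw [hwt]; noncomm_ring
    _ = Sg := by rw [hwr, hwl, one_mul, mul_one]
end Stmt7Aux2


open Stmt7Aux Stmt7Aux2

/-- Every positive definite `S` with `P S P = P Q P` can be written as
`S = (I + N Y) Q (I + Y N)` with `Y` symmetric and `I + N^{1/2} Y N^{1/2} ≻ 0`. -/
theorem stmt7 {n : ℕ} (N Q P : Matrix (Fin n) (Fin n) ℝ)
    (hN : N.PosSemidef) (hQ : Q.PosDef) (hP : IsOrthProjKer N P)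
    (S : Matrix (Fin n) (Fin n) ℝ) (hS : S.PosDef)
    (hPS : P * S * P = P * Q * P) :
    ∃ Y : Matrix (Fin n) (Fin n) ℝ, Yᵀ = Y ∧
      (1 + (hN.1.eigenvectorUnitary.1 * diagonal ((RCLike.ofReal : ℝ → ℝ) ∘ Real.sqrt ∘ hN.1.eigenvalues) *
        (star hN.1.eigenvectorUnitary : Matrix (Fin n) (Fin n) ℝ)) * Y *
        (hN.1.eigenvectorUnitary.1 * diagonal ((RCLike.ofReal : ℝ → ℝ) ∘ Real.sqrt ∘ hN.1.eigenvalues) *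
        (star hN.1.eigenvectorUnitary : Matrix (Fin n) (Fin n) ℝ))).PosDef ∧
      S = (1 + N * Y) * Q * (1 + Y * N) := by
  obtain ⟨hPt, hPP, hker⟩ := hP
  have hNt : Nᵀ = N := (herm_iff_transpose N).1 hN.isHermitian
  have hSt : Sᵀ = S := (herm_iff_transpose S).1 hS.isHermitian
  have hQt : Qᵀ = Q := (herm_iff_transpose Q).1 hQ.isHermitian
  have hNP0 : N * P = 0 := by
    refine eq_zero_of_mulVec (fun x => ?_)
    have h1 : P *ᵥ (P *ᵥ x) = P *ᵥ x := by rw [Matrix.mulVec_mulVec, hPP]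
    have h2 : N *ᵥ (P *ᵥ x) = 0 := (hker _).1 h1
    rw [← Matrix.mulVec_mulVec] at *
    exact h2
  have hPN0 : P * N = 0 := by
    have h := congrArg Matrix.transpose hNP0
    rwa [Matrix.transpose_mul, hPt, hNt, Matrix.transpose_zero] at h
  set R := psdSqrt hN with hRdef
  have hRt : Rᵀ = R := (herm_iff_transpose R).1 (psdSqrt_posSemidef hN).isHermitian
  have hRR : R * R = N := psdSqrt_mul_self hN
  have hRP0 : R * P = 0 := by
    rw [← Matrix.conjTranspose_mul_self_eq_zero (A := R * P),
      Matrix.conjTranspose_eq_transpose_of_trivial, Matrix.transpose_mul, hPt, hRt]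
    calc P * R * (R * P) = P * ((R * R) * P) := by noncomm_ring
      _ = 0 := by rw [hRR, hNP0, mul_zero]
  have hPR0 : P * R = 0 := by
    have h := congrArg Matrix.transpose hRP0
    rwa [Matrix.transpose_mul, hPt, hRt, Matrix.transpose_zero] at h
  -- the matrix M = (N+P)⁻¹
  have hNPpd : (N + P).PosDef := by
    have hform : N + P = Rᵀ * 1 * R + Pᵀ * 1 * P := by
      rw [hRt, hPt, mul_one, mul_one, hRR, hPP]
    rw [hform]
    refine posDef_conj_add R P Matrix.PosDef.one Matrix.PosDef.one (fun x h1 h2 => ?_)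
    have hNx : N *ᵥ x = 0 := by rw [← hRR, ← Matrix.mulVec_mulVec, h1, Matrix.mulVec_zero]
    have h3 := (hker x).2 hNx
    rw [h2] at h3
    exact h3.symm
  set M := (N + P)⁻¹ with hMdef
  have hMl : (N + P) * M = 1 := Matrix.mul_nonsing_inv _ hNPpd.det_pos.ne'.isUnit
  have hMr : M * (N + P) = 1 := Matrix.nonsing_inv_mul _ hNPpd.det_pos.ne'.isUnit
  have hMt : Mᵀ = M := by
    rw [hMdef, Matrix.transpose_nonsing_inv, Matrix.transpose_add, hNt, hPt]
  have hPM : P * M = P := by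
    have h1 : P * (N + P) = P := by rw [mul_add, hPN0, zero_add, hPP]
    calc P * M = (P * (N + P)) * M := by rw [h1]
      _ = P * ((N + P) * M) := by rw [mul_assoc]
      _ = P := by rw [hMl, mul_one]
  have hMP : M * P = P := by
    have h := congrArg Matrix.transpose hPM
    rwa [Matrix.transpose_mul, hMt, hPt] at h
  have hNM : N * M = 1 - P := by
    calc N * M = (N + P) * M - P * M := by rw [add_mul]; abel
      _ = 1 - P := by rw [hMl, hPM]
  have hMN : M * N = 1 - P := by
    have h := congrArg Matrix.transpose hNM
    rwa [Matrix.transpose_mul, Matrix.transpose_sub, Matrix.transpose_one, hMt, hNt, hPt] at h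
  have hRM : R * M = M * R := by
    have hcomm : R * (N + P) = (N + P) * R := by
      rw [mul_add, add_mul, hRP0, hPR0, ← hRR]; noncomm_ring
    calc R * M = (M * (N + P)) * (R * M) := by rw [hMr, one_mul]
      _ = M * ((N + P) * R) * M := by noncomm_ring
      _ = M * (R * (N + P)) * M := by rw [hcomm]
      _ = (M * R) * ((N + P) * M) := by noncomm_ring
      _ = M * R := by rw [hMl, mul_one]
  have hRMR : R * (M * R) = 1 - P := by
    calc R * (M * R) = R * (R * M) := by rw [hRM]
      _ = (R * R) * M := by rw [mul_assoc]
      _ = 1 - P := by rw [hRR, hNM]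
  -- the matrix p = (PSP + (1-P))⁻¹ * P
  have hPE0 : P * (1 - P) = 0 := by rw [mul_sub, mul_one, hPP, sub_self]
  have hEP0 : (1 - P) * P = 0 := by rw [sub_mul, one_mul, hPP, sub_self]
  have hEE : (1 - P) * (1 - P) = 1 - P := by rw [mul_sub, mul_one, hEP0, sub_zero]
  have hEt : (1 - P)ᵀ = 1 - P := by rw [Matrix.transpose_sub, Matrix.transpose_one, hPt]
  set Sh := P * S * P + (1 - P) with hShdef
  have hShpd : Sh.PosDef := by
    have hform : Sh = Pᵀ * S * P + (1 - P)ᵀ * 1 * (1 - P) := by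
      rw [hShdef, hPt, mul_one, hEt, hEE]
    rw [hform]
    refine posDef_conj_add P (1 - P) hS Matrix.PosDef.one (fun x h1 h2 => ?_)
    have : (P + (1 - P)) *ᵥ x = x := by simp
    rw [Matrix.add_mulVec, h1, h2, add_zero] at this
    exact this.symm
  have hSht : Shᵀ = Sh := by
    rw [hShdef, Matrix.transpose_add, hEt, Matrix.transpose_mul, Matrix.transpose_mul, hPt, hSt,
      mul_assoc]
  set u := Sh⁻¹ with hudef
  have hul : Sh * u = 1 := Matrix.mul_nonsing_inv _ hShpd.det_pos.ne'.isUnit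
  have hur : u * Sh = 1 := Matrix.nonsing_inv_mul _ hShpd.det_pos.ne'.isUnit
  have hut : uᵀ = u := by rw [hudef, Matrix.transpose_nonsing_inv, hSht]
  have hPSh : P * Sh = P * S * P := by
    rw [hShdef, mul_add, hPE0, add_zero]
    calc P * (P * S * P) = (P * P) * S * P := by noncomm_ring
      _ = P * S * P := by rw [hPP]
  have hShP : Sh * P = P * S * P := by
    have h := congrArg Matrix.transpose hPSh
    rwa [Matrix.transpose_mul, hSht, hPt, Matrix.transpose_mul, Matrix.transpose_mul, hPt, hSt,
      ← mul_assoc] at h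
  have hPu : P * u = u * P := by
    calc P * u = (u * Sh) * (P * u) := by rw [hur, one_mul]
      _ = u * (Sh * P) * u := by noncomm_ring
      _ = u * (P * Sh) * u := by rw [hShP, hPSh]
      _ = (u * P) * (Sh * u) := by noncomm_ring
      _ = u * P := by rw [hul, mul_one]
  set p := u * P with hpdef
  have hpt : pᵀ = p := by rw [hpdef, Matrix.transpose_mul, hPt, hut, hPu]
  have hpP : p * P = p := by rw [hpdef, mul_assoc, hPP]
  have hPp : P * p = p := by rw [hpdef, ← mul_assoc, hPu, mul_assoc, hPP]
  have hpE : p * (1 - P) = 0 := by rw [hpdef, mul_assoc, hPE0, mul_zero]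
  have hpSh : p * Sh = P := by
    rw [hpdef, mul_assoc, hPSh, ← hShP, ← mul_assoc, hur, one_mul]
  have hpPSP : p * (P * S * P) = P := by
    have h := hpSh
    rwa [hShdef, mul_add, hpE, add_zero] at h
  have hpSP : p * S * P = P := by
    have h1 : p * S * P = p * (P * S * P) := by
      nth_rewrite 1 [← hpP]; noncomm_ring
    rw [h1, hpPSP]
  have hPSp : P * S * p = P := by
    have h := congrArg Matrix.transpose hpSP
    rwa [Matrix.transpose_mul, Matrix.transpose_mul, hPt, hSt, hpt, ← mul_assoc] at h
  have hpQP : p * Q * P = P := by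
    have h1 : p * Q * P = p * (P * Q * P) := by
      nth_rewrite 1 [← hpP]; noncomm_ring
    rw [h1, ← hPS, hpPSP]
  have hPQp : P * Q * p = P := by
    have h := congrArg Matrix.transpose hpQP
    rwa [Matrix.transpose_mul, Matrix.transpose_mul, hPt, hQt, hpt, ← mul_assoc] at h
  have hpSp : p * S * p = p := by
    have h1 : p * S * p = (p * S * P) * p := by rw [mul_assoc (p * S), hPp]
    rw [h1, hpSP, hPp]
  have hpQp : p * Q * p = p := by
    have h1 : p * Q * p = (p * Q * P) * p := by rw [mul_assoc (p * Q), hPp]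
    rw [h1, hpQP, hPp]
  have hNp0 : N * p = 0 := by rw [← hPp, ← mul_assoc, hNP0, zero_mul]
  have hpN0 : p * N = 0 := by rw [← hpP, mul_assoc, hPN0, mul_zero]
  have hRp0 : R * p = 0 := by rw [← hPp, ← mul_assoc, hRP0, zero_mul]
  have hpR0 : p * R = 0 := by rw [← hpP, mul_assoc, hPR0, mul_zero]
  have hpM : p * M = p := by
    calc p * M = (p * P) * M := by rw [hpP]
      _ = p * (P * M) := by rw [mul_assoc]
      _ = p := by rw [hPM, hpP]
  have hMp : M * p = p := by
    have h := congrArg Matrix.transpose hpM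
    rwa [Matrix.transpose_mul, hMt, hpt] at h
  -- Sigma and Theta (Schur-complement style matrices) and the geometric mean G
  set Sig := S - S * (p * S) + P with hSigdef
  set Th := Q - Q * (p * Q) + P with hThdef
  have cpSp : ∀ X : Matrix (Fin n) (Fin n) ℝ, p * (S * (p * X)) = p * X := fun X => by
    rw [← mul_assoc, ← mul_assoc, hpSp]
  have cpQp : ∀ X : Matrix (Fin n) (Fin n) ℝ, p * (Q * (p * X)) = p * X := fun X => by
    rw [← mul_assoc, ← mul_assoc, hpQp]
  have hpSp_r : p * (S * p) = p := by rw [← mul_assoc, hpSp]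
  have hpQp_r : p * (Q * p) = p := by rw [← mul_assoc, hpQp]
  have hpSP_r : p * (S * P) = P := by rw [← mul_assoc, hpSP]
  have hPSp_r : P * (S * p) = P := by rw [← mul_assoc, hPSp]
  have hpQP_r : p * (Q * P) = P := by rw [← mul_assoc, hpQP]
  have hPQp_r : P * (Q * p) = P := by rw [← mul_assoc, hPQp]
  have hSigpd : Sig.PosDef := by
    have hform : Sig = (1 - p * S)ᵀ * S * (1 - p * S) + Pᵀ * 1 * P := by
      rw [hSigdef, Matrix.transpose_sub, Matrix.transpose_one, Matrix.transpose_mul, hpt, hSt,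
        hPt, mul_one]
      simp only [sub_mul, mul_sub, one_mul, mul_one, mul_assoc, cpSp, hpSp_r, hPP]
      abel
    rw [hform]
    refine posDef_conj_add (1 - p * S) P hS Matrix.PosDef.one (fun x h1 h2 => ?_)
    rw [Matrix.sub_mulVec, Matrix.one_mulVec] at h1
    have hx : x = (p * S) *ᵥ x := (sub_eq_zero.1 h1)
    have hPpS : P * (p * S) = p * S := by rw [← mul_assoc, hPp]
    have h3 : P *ᵥ x = x := by
      calc P *ᵥ x = P *ᵥ ((p * S) *ᵥ x) := by rw [← hx]
        _ = (P * (p * S)) *ᵥ x := Matrix.mulVec_mulVec _ _ _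
        _ = x := by rw [hPpS, ← hx]
    rw [h2] at h3
    exact h3.symm
  have hThpd : Th.PosDef := by
    have hform : Th = (1 - p * Q)ᵀ * Q * (1 - p * Q) + Pᵀ * 1 * P := by
      rw [hThdef, Matrix.transpose_sub, Matrix.transpose_one, Matrix.transpose_mul, hpt, hQt,
        hPt, mul_one]
      simp only [sub_mul, mul_sub, one_mul, mul_one, mul_assoc, cpQp, hpQp_r, hPP]
      abel
    rw [hform]
    refine posDef_conj_add (1 - p * Q) P hQ Matrix.PosDef.one (fun x h1 h2 => ?_)
    rw [Matrix.sub_mulVec, Matrix.one_mulVec] at h1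
    have hx : x = (p * Q) *ᵥ x := (sub_eq_zero.1 h1)
    have hPpQ : P * (p * Q) = p * Q := by rw [← mul_assoc, hPp]
    have h3 : P *ᵥ x = x := by
      calc P *ᵥ x = P *ᵥ ((p * Q) *ᵥ x) := by rw [← hx]
        _ = (P * (p * Q)) *ᵥ x := Matrix.mulVec_mulVec _ _ _
        _ = x := by rw [hPpQ, ← hx]
    rw [h2] at h3
    exact h3.symm
  have hSigP : Sig * P = P := by
    rw [hSigdef]
    simp only [add_mul, sub_mul, mul_assoc, hpSP_r, hPP]
    abel
  have hThP : Th * P = P := by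
    rw [hThdef]
    simp only [add_mul, sub_mul, mul_assoc, hpQP_r, hPP]
    abel
  have hWpd : (M * Th * M).PosDef := by
    have h1 : (Mᵀ * Th * M).PosDef := by
      refine posDef_conj M hThpd (fun x hx => ?_)
      have h2 : ((N + P) * M) *ᵥ x = 0 := by
        rw [← Matrix.mulVec_mulVec, hx, Matrix.mulVec_zero]
      rwa [hMl, Matrix.one_mulVec] at h2
    rwa [hMt] at h1
  have hWP : (M * Th * M) * P = P := by
    calc M * Th * M * P = M * (Th * (M * P)) := by noncomm_ring
      _ = P := by rw [hMP, hThP, hMP]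
  obtain ⟨G, hGpd, hGt, hGWG, hGP, hPG⟩ := exists_geo_mean hWpd hSigpd hWP hSigP hPt
  -- collapse lemmas
  have cMP : ∀ X : Matrix (Fin n) (Fin n) ℝ, M * (P * X) = P * X := fun X => by
    rw [← mul_assoc, hMP]
  have cPM : ∀ X : Matrix (Fin n) (Fin n) ℝ, P * (M * X) = P * X := fun X => by
    rw [← mul_assoc, hPM]
  have cGP : ∀ X : Matrix (Fin n) (Fin n) ℝ, G * (P * X) = P * X := fun X => by
    rw [← mul_assoc, hGP]
  have cPG : ∀ X : Matrix (Fin n) (Fin n) ℝ, P * (G * X) = P * X := fun X => by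
    rw [← mul_assoc, hPG]
  have cPSp2 : ∀ X : Matrix (Fin n) (Fin n) ℝ, P * (S * (p * X)) = P * X := fun X => by
    rw [← mul_assoc, ← mul_assoc, hPSp]
  have cPQp2 : ∀ X : Matrix (Fin n) (Fin n) ℝ, P * (Q * (p * X)) = P * X := fun X => by
    rw [← mul_assoc, ← mul_assoc, hPQp]
  have cNM : ∀ X : Matrix (Fin n) (Fin n) ℝ, N * (M * X) = X - P * X := fun X => by
    rw [← mul_assoc, hNM, sub_mul, one_mul]
  have cNp : ∀ X : Matrix (Fin n) (Fin n) ℝ, N * (p * X) = 0 := fun X => by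
    rw [← mul_assoc, hNp0, zero_mul]
  have cNP2 : ∀ X : Matrix (Fin n) (Fin n) ℝ, N * (P * X) = 0 := fun X => by
    rw [← mul_assoc, hNP0, zero_mul]
  have cRp : ∀ X : Matrix (Fin n) (Fin n) ℝ, R * (p * X) = 0 := fun X => by
    rw [← mul_assoc, hRp0, zero_mul]
  have cRP2 : ∀ X : Matrix (Fin n) (Fin n) ℝ, R * (P * X) = 0 := fun X => by
    rw [← mul_assoc, hRP0, zero_mul]
  -- the solution Y
  set A := S * p - P - G * M * Q * p with hAdef
  set Y := M * G * M - M + M * A + Aᵀ * M with hYdef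
  have hYt : Yᵀ = Y := by
    rw [hYdef]
    simp only [Matrix.transpose_add, Matrix.transpose_sub, Matrix.transpose_mul,
      Matrix.transpose_transpose, hMt, hGt, mul_assoc]
    abel
  have hNY : 1 + N * Y = G * M - G * (M * (Q * p)) + S * p := by
    rw [hYdef, hAdef]
    simp only [Matrix.transpose_sub, Matrix.transpose_mul, hpt, hSt, hPt, hQt, hMt, hGt,
      mul_add, add_mul, mul_sub, sub_mul, mul_assoc, mul_one, one_mul,
      cNM, cNp, cNP2, cPG, cPM, cGP, cMP, cPSp2, cPQp2, hPSp_r, hPQp_r, hPP, hNM, hNp0, hNP0,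
      zero_mul, mul_zero, hPM, hMP, hGP, hPG]
    abel
  have hLT : (G * M - G * (M * (Q * p)) + S * p)ᵀ = M * G - p * (Q * (M * G)) + p * S := by
    simp only [Matrix.transpose_add, Matrix.transpose_sub, Matrix.transpose_mul,
      hpt, hSt, hQt, hMt, hGt, mul_assoc]
  have hRIC2 : G * (M * (Q * (M * G))) - G * (M * (Q * (p * (Q * (M * G))))) = S - S * (p * S) := by
    have h0 := hGWG
    rw [hThdef, hSigdef] at h0
    have h1 : G * (M * (Q - Q * (p * Q) + P) * M) * G
        = G * (M * (Q * (M * G))) - G * (M * (Q * (p * (Q * (M * G))))) + P := by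
      simp only [mul_add, add_mul, mul_sub, sub_mul, mul_assoc,
        cMP, cPM, cGP, cPG, hMP, hPM, hGP, hPG, hPP]
      all_goals abel
    rw [h1] at h0
    exact add_right_cancel h0
  have hLQL : (G * M - G * (M * (Q * p)) + S * p) * Q *
      (M * G - p * (Q * (M * G)) + p * S) = S := by
    have hexp : (G * M - G * (M * (Q * p)) + S * p) * Q *
        (M * G - p * (Q * (M * G)) + p * S)
        = (G * (M * (Q * (M * G))) - G * (M * (Q * (p * (Q * (M * G)))))) + S * (p * S) := by
      simp only [mul_add, add_mul, mul_sub, sub_mul, mul_assoc, cpQp, hpQp_r]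
      abel
    rw [hexp, hRIC2]
    abel
  have hYN : 1 + Y * N = M * G - p * (Q * (M * G)) + p * S := by
    have h := congrArg Matrix.transpose hNY
    rwa [Matrix.transpose_add, Matrix.transpose_one, Matrix.transpose_mul, hYt, hNt, hLT] at h
  have hform : 1 + R * Y * R = Pᵀ * 1 * P + (M * R)ᵀ * G * (M * R) := by
    rw [hYdef, hAdef]
    simp only [Matrix.transpose_sub, Matrix.transpose_mul, hpt, hSt, hPt, hQt, hMt, hGt, hRt,
      mul_add, add_mul, mul_sub, sub_mul, mul_assoc, mul_one, one_mul,
      cRp, cRP2, hpR0, hPR0, hRMR, hPP, mul_zero, zero_mul]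
    abel
  have hPD : (1 + R * Y * R).PosDef := by
    rw [hform]
    refine posDef_conj_add P (M * R) Matrix.PosDef.one hGpd (fun x h1 h2 => ?_)
    have h3 : (1 - P) *ᵥ x = 0 := by
      rw [← hRMR, ← Matrix.mulVec_mulVec, h2, Matrix.mulVec_zero]
    rw [Matrix.sub_mulVec, Matrix.one_mulVec, h1, sub_zero] at h3
    exact h3
  refine ⟨Y, hYt, hPD, ?_⟩
  rw [hNY, hYN]
  exact hLQL.symm
end

section
/- Let Φ_A ∈ GL(n,ℝ), let G, H ∈ ℝ^{n×n} be positive semidefinite with G = Φ_A H Φ_Aᵀ, let P_G and P_H be the orthogonal projections onto ker G and ker H respectively, and let Σ₀ ≻ 0. Then for any symmetric positive definite Σ, P_G Σ P_G = P_G Φ_A Σ₀ Φ_Aᵀ P_G holds if and only if P_H Φ_A⁻¹ Σ Φ_A⁻ᵀ P_H = P_H Σ₀ P_H. -/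
open Matrix

private lemma dot_conj {n : ℕ} (A M : Matrix (Fin n) (Fin n) ℝ) (x y : Fin n → ℝ) :
    x ⬝ᵥ (A * M * Aᵀ).mulVec y = (Aᵀ.mulVec x) ⬝ᵥ M.mulVec (Aᵀ.mulVec y) := by
  rw [← Matrix.mulVec_mulVec, ← Matrix.mulVec_mulVec, Matrix.dotProduct_mulVec x A,
    ← Matrix.mulVec_transpose]

private lemma dot_proj {n : ℕ} {P : Matrix (Fin n) (Fin n) ℝ} (hPt : Pᵀ = P)
    (M : Matrix (Fin n) (Fin n) ℝ) (x y : Fin n → ℝ) :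
    x ⬝ᵥ (P * M * P).mulVec y = (P.mulVec x) ⬝ᵥ M.mulVec (P.mulVec y) := by
  have := dot_conj P M x y
  rwa [hPt] at this

private lemma bilinear_ext {n : ℕ} {M K : Matrix (Fin n) (Fin n) ℝ}
    (h : ∀ x y, x ⬝ᵥ M.mulVec y = x ⬝ᵥ K.mulVec y) : M = K := by
  ext i j
  have := h (Pi.single i 1) (Pi.single j 1)
  simpa [mulVec, dotProduct, Pi.single_apply] using this

/-- Bridge: the projected equation holds iff the bilinear forms agree on the kernel. -/
private lemma bridge {n : ℕ} {N P : Matrix (Fin n) (Fin n) ℝ} (M K : Matrix (Fin n) (Fin n) ℝ)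
    (hP : IsOrthProjKer N P) :
    (P * M * P = P * K * P ↔
      ∀ x y, N.mulVec x = 0 → N.mulVec y = 0 →
        x ⬝ᵥ M.mulVec y = x ⬝ᵥ K.mulVec y) := by
  obtain ⟨hPt, hPP, hker⟩ := hP
  constructor
  · intro hEq x y hx hy
    have hpx : P.mulVec x = x := (hker x).mpr hx
    have hpy : P.mulVec y = y := (hker y).mpr hy
    have h1 := dot_proj hPt M x y
    have h2 := dot_proj hPt K x y
    rw [hpx, hpy] at h1 h2
    rw [← h1, ← h2, hEq]
  · intro h
    apply bilinear_ext
    intro x y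
    rw [dot_proj hPt M x y, dot_proj hPt K x y]
    apply h
    · exact (hker _).mp (by rw [Matrix.mulVec_mulVec, hPP])
    · exact (hker _).mp (by rw [Matrix.mulVec_mulVec, hPP])

/-- For invertible `Φ_A`, `G = Φ_A H Φ_Aᵀ` with `G, H ⪰ 0`, projections `P_G`, `P_H` onto
`ker G` and `ker H`, and `Σ₀ ≻ 0`: a positive definite `Σ` satisfies
`P_G Σ P_G = P_G Φ_A Σ₀ Φ_Aᵀ P_G` iff `P_H Φ_A⁻¹ Σ Φ_A⁻ᵀ P_H = P_H Σ₀ P_H`. -/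
theorem stmt19 {n : ℕ}
    (PhiA G H PG PH S₀ : Matrix (Fin n) (Fin n) ℝ)
    (hPhiA : IsUnit PhiA) (hG : G.PosSemidef) (hH : H.PosSemidef)
    (hGH : G = PhiA * H * PhiAᵀ)
    (hPG : IsOrthProjKer G PG) (hPH : IsOrthProjKer H PH)
    (hS₀ : S₀.PosDef) :
    ∀ S : Matrix (Fin n) (Fin n) ℝ, S.PosDef →
      (PG * S * PG = PG * (PhiA * S₀ * PhiAᵀ) * PG ↔
        PH * (PhiA⁻¹ * S * (PhiA⁻¹)ᵀ) * PH = PH * S₀ * PH) := by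
  intro S _hS
  have hdet : IsUnit PhiA.det := (Matrix.isUnit_iff_isUnit_det _).mp hPhiA
  have hinv1 : PhiA * PhiA⁻¹ = 1 := Matrix.mul_nonsing_inv _ hdet
  have hinv2 : PhiA⁻¹ * PhiA = 1 := Matrix.nonsing_inv_mul _ hdet
  -- kernel correspondence
  have hkercorr : ∀ x : Fin n → ℝ, G.mulVec x = 0 ↔ H.mulVec (PhiAᵀ.mulVec x) = 0 := by
    intro x
    constructor
    · intro hx
      have h0 : x ⬝ᵥ G.mulVec x = 0 := by rw [hx]; simp
      rw [hGH, dot_conj] at h0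
      have := (hH.dotProduct_mulVec_zero_iff (PhiAᵀ.mulVec x)).mp (by simpa using h0)
      exact this
    · intro hx
      rw [hGH, ← Matrix.mulVec_mulVec, ← Matrix.mulVec_mulVec, hx, Matrix.mulVec_zero]
  -- transpose inverse facts
  have htx : ∀ u : Fin n → ℝ, PhiAᵀ.mulVec ((PhiA⁻¹)ᵀ.mulVec u) = u := by
    intro u
    rw [Matrix.mulVec_mulVec, ← Matrix.transpose_mul, hinv2, Matrix.transpose_one,
      Matrix.one_mulVec]
  have hty : ∀ x : Fin n → ℝ, (PhiA⁻¹)ᵀ.mulVec (PhiAᵀ.mulVec x) = x := by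
    intro x
    rw [Matrix.mulVec_mulVec, ← Matrix.transpose_mul, hinv1, Matrix.transpose_one,
      Matrix.one_mulVec]
  rw [bridge S (PhiA * S₀ * PhiAᵀ) hPG, bridge (PhiA⁻¹ * S * (PhiA⁻¹)ᵀ) S₀ hPH]
  constructor
  · intro h u v hu hv
    set x := (PhiA⁻¹)ᵀ.mulVec u with hxdef
    set y := (PhiA⁻¹)ᵀ.mulVec v with hydef
    have hx : G.mulVec x = 0 := (hkercorr x).mpr (by rw [hxdef, htx]; exact hu)
    have hy : G.mulVec y = 0 := (hkercorr y).mpr (by rw [hydef, htx]; exact hv)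
    calc u ⬝ᵥ (PhiA⁻¹ * S * (PhiA⁻¹)ᵀ).mulVec v
        = x ⬝ᵥ S.mulVec y := dot_conj _ _ _ _
      _ = x ⬝ᵥ (PhiA * S₀ * PhiAᵀ).mulVec y := h x y hx hy
      _ = (PhiAᵀ.mulVec x) ⬝ᵥ S₀.mulVec (PhiAᵀ.mulVec y) := dot_conj _ _ _ _
      _ = u ⬝ᵥ S₀.mulVec v := by rw [hxdef, hydef, htx, htx]
  · intro h x y hx hy
    have hu : H.mulVec (PhiAᵀ.mulVec x) = 0 := (hkercorr x).mp hx
    have hv : H.mulVec (PhiAᵀ.mulVec y) = 0 := (hkercorr y).mp hy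
    calc x ⬝ᵥ S.mulVec y
        = ((PhiA⁻¹)ᵀ.mulVec (PhiAᵀ.mulVec x)) ⬝ᵥ
            S.mulVec ((PhiA⁻¹)ᵀ.mulVec (PhiAᵀ.mulVec y)) := by rw [hty, hty]
      _ = (PhiAᵀ.mulVec x) ⬝ᵥ (PhiA⁻¹ * S * (PhiA⁻¹)ᵀ).mulVec (PhiAᵀ.mulVec y) :=
          (dot_conj _ _ _ _).symm
      _ = (PhiAᵀ.mulVec x) ⬝ᵥ S₀.mulVec (PhiAᵀ.mulVec y) := h _ _ hu hv
      _ = x ⬝ᵥ (PhiA * S₀ * PhiAᵀ).mulVec y := (dot_conj _ _ _ _).symm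
end
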